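/- arXiv:1501.02964 — 14 statements merged into one kernel-verified Lean document; each statement's English description precedes it below -/
import Mathlib

section
/- Let R be a *-ring which is *-regular, i.e., for every x in R there exists a projection p such that xR = pR (meaning {x*r : r ∈ R} = {p*r : r ∈ R}). Then every idempotent e of R is *-clean: there exist a projection p and a unit u of R with e = p + u. -/
/-- In a *-regular *-ring, every idempotent is *-clean. -/
theorem star_regular_idempotent_star_clean {R : Type*} [Ring R] [StarRing R]
    (hreg : ∀ x : R, ∃ p : R, p ^ 2 = p ∧ star p = p ∧
      (Set.range fun r => x * r) = (Set.range fun r => p * r))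
    (e : R) (he : e ^ 2 = e) :
    ∃ p u : R, p ^ 2 = p ∧ star p = p ∧ IsUnit u ∧ e = p + u := by
  obtain ⟨p, hp2, hps, hrange⟩ := hreg e
  have hp2' : p * p = p := by rw [← sq]; exact hp2
  have he2' : e * e = e := by rw [← sq]; exact he
  -- e ∈ range (e * ·) = range (p * ·), so p * e = e
  have he_mem : e ∈ Set.range fun r => p * r := by
    rw [← hrange]; exact ⟨e, he2'⟩
  obtain ⟨r, hr⟩ := he_mem
  have hpe : p * e = e := by rw [← hr, ← mul_assoc, hp2']
  -- p ∈ range (p * ·) = range (e * ·), so e * p = p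
  have hp_mem : p ∈ Set.range fun r => e * r := by
    rw [hrange]; exact ⟨p, hp2'⟩
  obtain ⟨s, hs⟩ := hp_mem
  have hep : e * p = p := by rw [← hs, ← mul_assoc, he2']
  refine ⟨1 - p, e + p - 1, ?_, ?_, ?_, by noncomm_ring⟩
  · have : (1 - p) ^ 2 = 1 - 2 * p + p * p := by noncomm_ring
    rw [this, hp2']; noncomm_ring
  · simp [star_sub, hps]
  · have hu : (e + p - 1) * (e + p - 1) = 1 := by
      have : (e + p - 1) * (e + p - 1) =
          e * e + e * p + p * e + p * p - 2 * e - 2 * p + 1 := by noncomm_ring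
      rw [this, he2', hep, hpe, hp2']; noncomm_ring
    exact ⟨⟨e + p - 1, e + p - 1, hu, hu⟩, rfl⟩
end

section
/- Let R be a Boolean *-ring, i.e., a *-ring in which x^2 = x for every x. Then R is *-clean (every element is the sum of a projection and a unit) if and only if the involution is the identity map, i.e., star x = x for all x ∈ R. -/
/-- A Boolean *-ring is *-clean iff the involution is the identity. -/
theorem boolean_star_clean_iff_star_id {R : Type*} [Ring R] [StarRing R]
    (hbool : ∀ x : R, x ^ 2 = x) :
    (∀ a : R, ∃ p u : R, p ^ 2 = p ∧ star p = p ∧ IsUnit u ∧ a = p + u) ↔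
      (∀ x : R, star x = x) := by
  have h2 : (1 + 1 : R) = 0 := by
    have h := hbool (1 + 1)
    have h' : ((1 + 1 : R)) ^ 2 = (1 + 1) + (1 + 1) := by noncomm_ring
    rw [h'] at h
    have := add_left_cancel (a := (1 + 1 : R)) (b := 1 + 1) (c := 0)
      (by rw [add_zero, h])
    exact this
  constructor
  · intro h x
    obtain ⟨p, u, hp, hs, hu, he⟩ := h x
    have hu1 : u = 1 := by
      have h1 : u * u = u * 1 := by rw [mul_one, ← sq, hbool]
      exact hu.mul_left_cancel h1
    subst hu1
    rw [he, star_add, hs, star_one]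
  · intro h a
    refine ⟨a + 1, 1, hbool _, h _, isUnit_one, ?_⟩
    rw [add_assoc, h2, add_zero]
end

section
/- Let R be a *-ring in which 2 is a unit. Then the following are equivalent: (1) R is clean and every unit of R is self-adjoint (star u = u for every unit u); (2) R is *-clean and the involution is the identity map (star x = x for all x ∈ R). -/
/-- For a *-ring with 2 a unit: R is clean with all units self-adjoint iff
R is *-clean with identity involution. -/
theorem clean_units_self_adjoint_iff_star_clean_star_id {R : Type*} [Ring R] [StarRing R]
    (h2 : IsUnit (2 : R)) :
    ((∀ a : R, ∃ e u : R, e ^ 2 = e ∧ IsUnit u ∧ a = e + u) ∧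
        (∀ u : R, IsUnit u → star u = u)) ↔
      ((∀ a : R, ∃ p u : R, p ^ 2 = p ∧ star p = p ∧ IsUnit u ∧ a = p + u) ∧
        (∀ x : R, star x = x)) := by
  constructor
  · rintro ⟨hc, hu⟩
    have hstar : ∀ x : R, star x = x := by
      intro x
      obtain ⟨e, u, he, hun, rfl⟩ := hc x
      have he' : e * e = e := by rw [← sq, he]
      have hmul : (1 - 2*e) * (1 - 2*e) = 1 := by
        have : (1 - 2*e) * (1 - 2*e) = 1 - 2*e - 2*e + 4*(e*e) := by noncomm_ring
        rw [this, he']; noncomm_ring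
      have hve : IsUnit (1 - 2*e) := ⟨⟨1 - 2*e, 1 - 2*e, hmul, hmul⟩, rfl⟩
      have hseq := hu _ hve
      have hstar2 : star (2 : R) = 2 := by
        simp
      have hs : 1 - star e * 2 = 1 - 2*e := by
        rw [← hseq, star_sub, star_one, star_mul, hstar2]
      have h2e : 2 * star e = 2 * e := by
        have h : star e * 2 = 2 * e := sub_right_injective hs
        rw [two_mul, ← mul_two]
        exact h
      have hse : star e = e := h2.mul_left_cancel h2e
      rw [star_add, hse, hu u hun]
    refine ⟨fun a => ?_, hstar⟩
    obtain ⟨e, u, he, hun, ha⟩ := hc a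
    exact ⟨e, u, he, hstar e, hun, ha⟩
  · rintro ⟨hc, hid⟩
    refine ⟨fun a => ?_, fun u _ => hid u⟩
    obtain ⟨p, u, hp, _, hun, ha⟩ := hc a
    exact ⟨p, u, hp, hun, ha⟩
end

section
/- Let R be a *-ring. The following are equivalent: (1) R is *-clean and 2 is a unit of R; (2) every element of R is the sum of a unit and a self-adjoint square root of 1, i.e., for every a ∈ R there exist t and a unit u with t^2 = 1, star t = t, and a = t + u. -/
/-- R is *-clean with 2 a unit iff every element is the sum of a unit and a
self-adjoint square root of 1. -/
theorem star_clean_two_unit_iff_sum_unit_self_adjoint_sqrt_one {R : Type*} [Ring R] [StarRing R] :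
    ((∀ a : R, ∃ p u : R, p ^ 2 = p ∧ star p = p ∧ IsUnit u ∧ a = p + u) ∧
        IsUnit (2 : R)) ↔
      (∀ a : R, ∃ t u : R, t ^ 2 = 1 ∧ star t = t ∧ IsUnit u ∧ a = t + u) := by
  constructor
  · rintro ⟨h, h2⟩ a
    obtain ⟨v, hv⟩ := h2
    have h2c : (2 : R) * ↑v⁻¹ = 1 := by rw [← hv]; exact v.mul_inv
    obtain ⟨p, u, hp, hsp, hu, heq⟩ := h (↑v⁻¹ * (a + 1))
    refine ⟨2 * p - 1, 2 * u, ?_, ?_, IsUnit.mul ⟨v, hv⟩ hu, ?_⟩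
    · have e : (2 * p - 1) ^ 2 = 4 * p ^ 2 - 4 * p + 1 := by noncomm_ring
      rw [e, hp]; noncomm_ring
    · rw [star_sub, star_mul, star_one, hsp]
      rw [show star (2:R) = 2 by simp, mul_two, two_mul]
    · have key : 2 * ((↑v⁻¹ : R) * (a + 1)) = a + 1 := by
        rw [← mul_assoc, h2c, one_mul]
      have e : a + 1 = 2 * (p + u) := by rw [← heq, key]
      have e2 : 2 * (p + u) = (2 * p - 1) + 2 * u + 1 := by noncomm_ring
      rw [e2] at e
      exact add_right_cancel e
  · intro h
    have h2 : IsUnit (2 : R) := by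
      obtain ⟨t, u, ht, hst, hu, heq⟩ := h 1
      have hu' : u = 1 - t := by rw [heq]; noncomm_ring
      have hz : u * (1 + t) = 0 := by
        rw [hu']
        have e : (1 - t) * (1 + t) = 1 - t ^ 2 := by noncomm_ring
        rw [e, ht, sub_self]
      have h1t : (1 : R) + t = 0 := by
        obtain ⟨w, hw⟩ := hu
        rw [← hw] at hz
        have := congrArg (fun x => (↑w⁻¹ : R) * x) hz
        simpa [← mul_assoc, w.inv_mul] using this
      have htm : t = -1 := eq_neg_of_add_eq_zero_right h1t
      have hu2 : u = 2 := by rw [hu', htm]; norm_num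
      rw [← hu2]; exact hu
    refine ⟨fun a => ?_, h2⟩
    obtain ⟨v, hv⟩ := h2
    have h2c : (2 : R) * ↑v⁻¹ = 1 := by rw [← hv]; exact v.mul_inv
    have hc2 : (↑v⁻¹ : R) * 2 = 1 := by rw [← hv]; exact v.inv_mul
    set c : R := ↑v⁻¹
    have hcen : ∀ x : R, c * x = x * c := by
      intro x
      calc c * x = c * (x * (2 * c)) := by rw [h2c, mul_one]
        _ = c * ((2 * x) * c) := by
              rw [show x * (2 * c) = (2 * x) * c by rw [← mul_assoc, mul_two, ← two_mul]]
        _ = x * c := by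
              rw [← mul_assoc, ← mul_assoc, hc2, one_mul]
    have hsc : star c = c := by
      have h1 : (2 : R) * star c = 1 := by
        have := congrArg star hc2
        simpa [star_mul] using this
      calc star c = star c * (2 * c) := by rw [h2c, mul_one]
        _ = (star c * 2) * c := by rw [mul_assoc]
        _ = (2 * star c) * c := by rw [two_mul, mul_two]
        _ = c := by rw [h1, one_mul]
    obtain ⟨t, u, ht, hst, hu, heq⟩ := h (2 * a - 1)
    refine ⟨c * (t + 1), c * u, ?_, ?_, (v⁻¹).isUnit.mul hu, ?_⟩
    · have e1 : (c * (t + 1)) ^ 2 = c * ((t + 1) * c) * (t + 1) := by noncomm_ring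
      rw [e1, ← hcen (t + 1), ← mul_assoc]
      have e2 : c * c * ((t + 1) * (t + 1)) = c * c * (t ^ 2 + 2 * t + 1) := by noncomm_ring
      have e3 : (c * c) * ((t+1) * (t+1)) = c * (t + 1) := by
        rw [e2, ht]
        rw [show (1 : R) + 2 * t + 1 = 2 * (t + 1) by noncomm_ring]
        rw [mul_assoc, ← mul_assoc c 2 (t+1), hc2, one_mul]
      rw [mul_assoc, e3]
    · rw [star_mul, star_add, star_one, hst, hsc, ← hcen]
    · have key : c * (2 * a) = a := by rw [← mul_assoc, hc2, one_mul]
      have e : 2 * a = t + 1 + u := by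
        rw [show t + 1 + u = (t + u) + 1 by abel, ← heq]; noncomm_ring
      calc a = c * (2 * a) := key.symm
        _ = c * (t + 1 + u) := by rw [e]
        _ = c * (t + 1) + c * u := by rw [mul_add]
end

section
/- Let R be a nontrivial *-ring. The following are equivalent: (1) R is *-clean and 0 and 1 are the only projections of R; (2) R is clean and 0 and 1 are the only idempotents of R; (3) R is a local ring, i.e., for every a ∈ R, either a or 1 − a is a unit. -/
private lemma idem_unit_eq_one {R : Type*} [Ring R] {e : R} (he : e ^ 2 = e)
    (hu : IsUnit e) : e = 1 := by
  have : e * e = e * 1 := by rw [mul_one, ← sq, he]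
  exact hu.mul_left_cancel this

private lemma trivial_idem_of_local {R : Type*} [Ring R]
    (h : ∀ a : R, IsUnit a ∨ IsUnit (1 - a)) :
    ∀ e : R, e ^ 2 = e → e = 0 ∨ e = 1 := by
  intro e he
  rcases h e with hu | hu
  · right; exact idem_unit_eq_one he hu
  · left
    have h1 : (1 - e) ^ 2 = 1 - e := by
      have : (1 - e) ^ 2 = 1 - e - e + e ^ 2 := by noncomm_ring
      rw [this, he]; abel
    have h2 := idem_unit_eq_one h1 hu
    exact sub_eq_self.mp h2

/-- For a nontrivial *-ring: *-clean with trivial projections iff clean with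
trivial idempotents iff local. -/
theorem star_clean_trivial_projections_tfae {R : Type*} [Ring R] [StarRing R] [Nontrivial R] :
    List.TFAE [
      (∀ a : R, ∃ p u : R, p ^ 2 = p ∧ star p = p ∧ IsUnit u ∧ a = p + u) ∧
        (∀ p : R, p ^ 2 = p ∧ star p = p → p = 0 ∨ p = 1),
      (∀ a : R, ∃ e u : R, e ^ 2 = e ∧ IsUnit u ∧ a = e + u) ∧
        (∀ e : R, e ^ 2 = e → e = 0 ∨ e = 1),
      ∀ a : R, IsUnit a ∨ IsUnit (1 - a)] := by
  tfae_have 1 → 3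
  | ⟨hc, ht⟩ => by
    intro a
    obtain ⟨p, u, h1, h2, h3, rfl⟩ := hc a
    rcases ht p ⟨h1, h2⟩ with rfl | rfl
    · left; simpa using h3
    · right
      have : (1 : R) - (1 + u) = -u := by abel
      rw [this]; exact h3.neg
  tfae_have 2 → 3
  | ⟨hc, ht⟩ => by
    intro a
    obtain ⟨e, u, h1, h3, rfl⟩ := hc a
    rcases ht e h1 with rfl | rfl
    · left; simpa using h3
    · right
      have : (1 : R) - (1 + u) = -u := by abel
      rw [this]; exact h3.neg
  tfae_have 3 → 1
  | h => by
    refine ⟨fun a => ?_, fun p ⟨hp, _⟩ => trivial_idem_of_local h p hp⟩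
    rcases h a with hu | hu
    · exact ⟨0, a, by simp, by simp, hu, by simp⟩
    · exact ⟨1, -(1 - a), by simp, by simp, hu.neg, by abel⟩
  tfae_have 3 → 2
  | h => by
    refine ⟨fun a => ?_, trivial_idem_of_local h⟩
    rcases h a with hu | hu
    · exact ⟨0, a, by simp, hu, by simp⟩
    · exact ⟨1, -(1 - a), by simp, hu.neg, by abel⟩
  tfae_finish
end

section
/- Let R be a *-ring and a ∈ R. The following are equivalent: (1) there exist an integer m ≥ 1, a projection e, and a unit u such that a^m = e*u and a, e, u pairwise commute; (2) there exist a projection f and a unit v such that a = f + v, f*v = v*f, and a*f is nilpotent; (3) there exists a projection p commuting with a such that a*p is a unit in the corner ring pRp (i.e., there exists y with y = p*y*p, (a*p)*y = p, and y*(a*p) = p) and a*(1 − p) is nilpotent; (4) there exists b commuting with a such that star (a*b) = a*b, b = b*a*b, and a − a^2*b is nilpotent. -/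
section
variable {R : Type*} [Ring R] [StarRing R]

lemma corner_unit_helper {R : Type*} [Ring R] (e z w n : R)
    (he : e * e = e) (hzw : z * w = e) (hwz : w * z = e)
    (hze : z * e = z) (hez : e * z = z)
    (hwe : w * e = w) (hew : e * w = w)
    (hen : e * n = 0) (hne : n * e = 0)
    (hn : IsNilpotent n) : IsUnit (z + n - (1 - e)) := by
  have hzn : z * n = 0 := by rw [← hze, mul_assoc, hen, mul_zero]
  have h1 : z * (e + e - 1 + n) = z := by
    rw [mul_add, mul_sub, mul_add, hze, hzn, mul_one]; abel
  have he2 : e * (e + e - 1 + n) = e := by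
    rw [mul_add, mul_sub, mul_add, he, hen, mul_one]; abel
  have h2 : (1 - e) * (e + e - 1 + n) = e - 1 + n := by
    rw [sub_mul, one_mul, he2]; abel
  have key : (z + (1 - e)) * (e + e - 1 + n) = z + n - (1 - e) := by
    rw [add_mul, h1, h2]; abel
  have hinv : (e + e - 1) * (e + e - 1) = 1 := by
    have h4 : (e + e - 1) * (e + e - 1) = e*e + e*e - e + (e*e + e*e - e) - (e + e - 1) := by
      rw [sub_mul, add_mul, mul_sub, mul_sub, mul_add, mul_add, mul_one, mul_one, one_mul]
    rw [h4, he]; abel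
  have hcomm : Commute n (e + e - 1) := by
    show n * (e + e - 1) = (e + e - 1) * n
    rw [mul_sub, mul_add, sub_mul, add_mul, hne, hen, one_mul, mul_one]
  have hu2 : IsUnit (e + e - 1 + n) :=
    hn.isUnit_add_left_of_commute ⟨⟨e + e - 1, e + e - 1, hinv, hinv⟩, rfl⟩ hcomm
  have f1 : (z + (1 - e)) * (w + (1 - e)) = 1 := by
    rw [add_mul, mul_add, mul_add, hzw, mul_sub, mul_one, hze, sub_mul, one_mul, mul_sub,
      mul_one, hew, sub_mul, one_mul, he]
    abel
  have f2 : (w + (1 - e)) * (z + (1 - e)) = 1 := by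
    rw [add_mul, mul_add, mul_add, hwz, mul_sub, mul_one, hwe, sub_mul, one_mul, mul_sub,
      mul_one, hez, sub_mul, one_mul, he]
    abel
  have hu1 : IsUnit (z + (1 - e)) := ⟨⟨z + (1 - e), w + (1 - e), f1, f2⟩, rfl⟩
  rw [← key]
  exact hu1.mul hu2

lemma dir12 (a : R)
    (h : ∃ m : ℕ, 1 ≤ m ∧ ∃ e u : R, e ^ 2 = e ∧ star e = e ∧ IsUnit u ∧
        a ^ m = e * u ∧ a * e = e * a ∧ a * u = u * a ∧ e * u = u * e) :
    ∃ f v : R, f ^ 2 = f ∧ star f = f ∧ IsUnit v ∧ a = f + v ∧ f * v = v * f ∧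
      IsNilpotent (a * f) := by
  obtain ⟨m, hm, e, u, he, hse, hu, ham, hae, hau, heu⟩ := h
  have he' : e * e = e := by rw [← pow_two]; exact he
  set u' : R := ↑hu.unit⁻¹ with hu'def
  have huu' : u * u' = 1 := hu.mul_val_inv
  have hu'u : u' * u = 1 := hu.val_inv_mul
  have hcau' : Commute a u' := by
    have : Commute a (hu.unit : R) := by rw [hu.unit_spec]; exact hau
    exact this.units_inv_right
  have hceu' : Commute e u' := by
    have : Commute e (hu.unit : R) := by rw [hu.unit_spec]; exact heu
    exact this.units_inv_right
  have hcae : Commute a e := hae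
  have hmm : m - 1 + 1 = m := Nat.sub_add_cancel hm
  have hkey : u' * (a ^ m * e) = e := by
    rw [ham, mul_assoc e u e, ← heu, ← mul_assoc e e u, he', ← mul_assoc, ← hceu'.eq,
      mul_assoc, hu'u, mul_one]
  have hze : (a*e)*e = a*e := by rw [mul_assoc, he']
  have hez : e*(a*e) = a*e := by rw [← mul_assoc, ← hae, mul_assoc, he']
  have hcaem : Commute e (a^(m-1)) := hcae.symm.pow_right (m-1)
  have hwe : (u' * a^(m-1) * e) * e = u' * a^(m-1) * e := by rw [mul_assoc, he']
  have hew : e * (u' * a^(m-1) * e) = u' * a^(m-1) * e := by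
    rw [← mul_assoc, ← mul_assoc, hceu'.eq, mul_assoc u' e, hcaem.eq, ← mul_assoc,
      mul_assoc (u' * a^(m-1)), he']
  have hpow : a * a^(m-1) = a^m := by rw [← pow_succ', hmm]
  have hzw : (a*e) * (u' * a^(m-1) * e) = e := by
    rw [mul_assoc, hew, mul_assoc u', ← mul_assoc a u', hcau'.eq, mul_assoc,
      ← mul_assoc a, hpow, hkey]
  have hwz : (u' * a^(m-1) * e) * (a*e) = e := by
    rw [mul_assoc (u' * a^(m-1)), hez, mul_assoc u', ← mul_assoc (a^(m-1)), ← pow_succ,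
      hmm, hkey]
  have hen : e * (a - a*e) = 0 := by
    rw [mul_sub, ← mul_assoc, ← hae, mul_assoc, he', sub_self]
  have hne : (a - a*e) * e = 0 := by rw [sub_mul, mul_assoc, he', sub_self]
  have h1 : a - a*e = a*(1-e) := by rw [mul_sub, mul_one]
  have hc1 : Commute a (1-e) := (Commute.one_right a).sub_right hcae
  have hidem : IsIdempotentElem (1-e) := IsIdempotentElem.one_sub he'
  have hnil : IsNilpotent (a - a*e) := by
    refine ⟨m, ?_⟩
    rw [h1, hc1.mul_pow, ← hmm, hidem.pow_succ_eq, hmm, ham, mul_sub, mul_one, heu,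
      mul_assoc, he', sub_self]
  have hvu : IsUnit (a - (1-e)) := by
    have hh := corner_unit_helper e (a*e) (u' * a^(m-1) * e) (a - a*e) he' hzw hwz hze hez
      hwe hew hen hne hnil
    have harr : a*e + (a - a*e) - (1-e) = a - (1-e) := by abel
    rwa [harr] at hh
  refine ⟨1-e, a - (1-e), ?_, ?_, hvu, ?_, ?_, ?_⟩
  · rw [pow_two]; exact hidem.eq
  · rw [star_sub, star_one, hse]
  · abel
  · have hfa : (1-e)*a = a*(1-e) := by rw [sub_mul, one_mul, mul_sub, mul_one, hae]
    rw [mul_sub, hfa, sub_mul a (1-e) (1-e)]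
  · rw [mul_sub, mul_one]; exact hnil

lemma dir21 (a : R)
    (h : ∃ f v : R, f ^ 2 = f ∧ star f = f ∧ IsUnit v ∧ a = f + v ∧ f * v = v * f ∧
      IsNilpotent (a * f)) :
    ∃ m : ℕ, 1 ≤ m ∧ ∃ e u : R, e ^ 2 = e ∧ star e = e ∧ IsUnit u ∧
        a ^ m = e * u ∧ a * e = e * a ∧ a * u = u * a ∧ e * u = u * e := by
  obtain ⟨f, v, hf, hsf, hv, hav, hfv, k, hk⟩ := h
  have hf' : f * f = f := by rw [← pow_two]; exact hf
  have hcfv : Commute f v := hfv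
  have hcaf : Commute a f := by
    show a * f = f * a
    rw [hav, add_mul, mul_add, hf', hfv]
  have hcav : Commute a v := by
    show a * v = v * a
    rw [hav, add_mul, mul_add, hfv]
  set m := k + 1 with hmdef
  have hm : 1 ≤ m := Nat.le_add_left 1 k
  have hafm : (a*f)^m = 0 := by rw [pow_succ, hk, zero_mul]
  have hcae : Commute a (1-f) := (Commute.one_right a).sub_right hcaf
  have hidem : IsIdempotentElem (1-f) := IsIdempotentElem.one_sub hf'
  have hae : a*(1-f) = v*(1-f) := by
    rw [hav, add_mul, mul_sub, mul_one, hf', sub_self, zero_add]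
  have hcv1f : Commute v (1-f) := (Commute.one_right v).sub_right hcfv.symm
  have h0 : a^m * f = 0 := by
    have : a^m * f = (a*f)^m := by
      have hidf : IsIdempotentElem f := hf'
      rw [hcaf.mul_pow, hmdef, hidf.pow_succ_eq]
    rw [this, hafm]
  have key : a^m = (1-f) * v^m := by
    calc a^m = a^m * (1-f) := by rw [mul_sub, mul_one, h0, sub_zero]
    _ = a^m * (1-f)^m := by rw [hmdef, hidem.pow_succ_eq]
    _ = (a*(1-f))^m := (hcae.mul_pow m).symm
    _ = (v*(1-f))^m := by rw [hae]
    _ = v^m * (1-f)^m := hcv1f.mul_pow m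
    _ = v^m * (1-f) := by rw [hmdef, hidem.pow_succ_eq]
    _ = (1-f) * v^m := ((hcv1f.symm.pow_right m).eq).symm
  refine ⟨m, hm, 1-f, v^m, ?_, ?_, hv.pow m, key, hcae.eq, (hcav.pow_right m).eq,
    (hcv1f.symm.pow_right m).eq⟩
  · rw [pow_two]; exact hidem.eq
  · rw [star_sub, star_one, hsf]

lemma dir23 (a : R)
    (h : ∃ f v : R, f ^ 2 = f ∧ star f = f ∧ IsUnit v ∧ a = f + v ∧ f * v = v * f ∧
      IsNilpotent (a * f)) :
    ∃ p : R, p ^ 2 = p ∧ star p = p ∧ a * p = p * a ∧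
        (∃ y : R, y = p * y * p ∧ (a * p) * y = p ∧ y * (a * p) = p) ∧
        IsNilpotent (a * (1 - p)) := by
  obtain ⟨f, v, hf, hsf, hv, hav, hfv, hnil⟩ := h
  have hf' : f * f = f := by rw [← pow_two]; exact hf
  have hp' : (1-f) * (1-f) = 1-f := (IsIdempotentElem.one_sub hf').eq
  have hcaf : Commute a f := by
    show a * f = f * a
    rw [hav, add_mul, mul_add, hf', hfv]
  have hcap : Commute a (1-f) := (Commute.one_right a).sub_right hcaf
  set v' : R := ↑hv.unit⁻¹ with hv'def
  have hvv' : v * v' = 1 := hv.mul_val_inv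
  have hv'v : v' * v = 1 := hv.val_inv_mul
  have hcfv' : Commute f v' := by
    have : Commute f (hv.unit : R) := by rw [hv.unit_spec]; exact hfv
    exact this.units_inv_right
  have hcpv' : Commute (1-f) v' := (Commute.one_left v').sub_left hcfv'
  have hfp : f * (1-f) = 0 := by rw [mul_sub, mul_one, hf', sub_self]
  refine ⟨1-f, ?_, ?_, hcap.eq, ⟨v' * (1-f), ?_, ?_, ?_⟩, ?_⟩
  · rw [pow_two]; exact hp'
  · rw [star_sub, star_one, hsf]
  · rw [← mul_assoc (1-f) v', hcpv'.eq, mul_assoc v', hp', mul_assoc v', hp']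
  · rw [mul_assoc, ← mul_assoc (1-f) v', hcpv'.eq, mul_assoc v', hp', ← mul_assoc, hav,
      add_mul, hcfv'.eq, hvv', add_mul, mul_assoc v', hfp, mul_zero, one_mul, zero_add]
  · rw [mul_assoc v', ← mul_assoc (1-f) a, ← hcap.eq, mul_assoc a, hp', ← mul_assoc,
      hav, mul_add, hv'v, add_mul, mul_assoc v', hfp, mul_zero, one_mul, zero_add]
  · rw [sub_sub_cancel]; exact hnil

lemma dir34 (a : R)
    (h : ∃ p : R, p ^ 2 = p ∧ star p = p ∧ a * p = p * a ∧
        (∃ y : R, y = p * y * p ∧ (a * p) * y = p ∧ y * (a * p) = p) ∧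
        IsNilpotent (a * (1 - p))) :
    ∃ b : R, a * b = b * a ∧ star (a * b) = a * b ∧ b = b * a * b ∧
        IsNilpotent (a - a ^ 2 * b) := by
  obtain ⟨p, hp, hsp, hap, ⟨y, hy, hay, hya⟩, hnil⟩ := h
  have hp' : p * p = p := by rw [← pow_two]; exact hp
  have hpy : p * y = y := by
    conv_lhs => rw [hy]
    rw [← mul_assoc p (p*y) p, ← mul_assoc p p y, hp', ← hy]
  have hyp : y * p = y := by
    conv_lhs => rw [hy]
    rw [mul_assoc (p*y) p p, hp', ← hy]
  have hab : a * y = p := by rw [← hpy, ← mul_assoc, hay]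
  have hba : y * a = p := by rw [← hyp, mul_assoc, ← hap, hya]
  refine ⟨y, by rw [hab, hba], by rw [hab, hsp], ?_, ?_⟩
  · rw [hba, hpy]
  · have hh : a - a^2*y = a*(1-p) := by rw [pow_two, mul_assoc, hab, mul_sub, mul_one]
    rw [hh]; exact hnil

lemma dir42 (a : R)
    (h : ∃ b : R, a * b = b * a ∧ star (a * b) = a * b ∧ b = b * a * b ∧
        IsNilpotent (a - a ^ 2 * b)) :
    ∃ f v : R, f ^ 2 = f ∧ star f = f ∧ IsUnit v ∧ a = f + v ∧ f * v = v * f ∧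
      IsNilpotent (a * f) := by
  obtain ⟨b, hab, hsab, hbab, hnil⟩ := h
  have hp' : (a*b) * (a*b) = a*b := by rw [mul_assoc, ← mul_assoc b a b, ← hbab]
  have hpb : (a*b) * b = b := by rw [hab, ← hbab]
  have hbp : b * (a*b) = b := by rw [← mul_assoc, ← hbab]
  have hpa : (a*b) * a = a * (a*b) := by rw [mul_assoc, ← hab]
  have hze : (a*(a*b)) * (a*b) = a*(a*b) := by rw [mul_assoc, hp']
  have hez : (a*b) * (a*(a*b)) = a*(a*b) := by rw [← mul_assoc, hpa, mul_assoc, hp']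
  have hzw : (a*(a*b)) * b = a*b := by rw [mul_assoc, hpb]
  have hwz : b * (a*(a*b)) = a*b := by rw [← hpa, ← mul_assoc, hbp, ← hab]
  have hen : (a*b) * (a - a*(a*b)) = 0 := by rw [mul_sub, hez, hpa, sub_self]
  have hne : (a - a*(a*b)) * (a*b) = 0 := by rw [sub_mul, hze, sub_self]
  have hn : IsNilpotent (a - a*(a*b)) := by
    have hh : a - a^2*b = a - a*(a*b) := by rw [pow_two, mul_assoc]
    rw [← hh]; exact hnil
  have hvu : IsUnit (a - (1 - a*b)) := by
    have hh := corner_unit_helper (a*b) (a*(a*b)) b (a - a*(a*b)) hp' hzw hwz hze hez hbp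
      hpb hen hne hn
    have harr : a*(a*b) + (a - a*(a*b)) - (1 - a*b) = a - (1 - a*b) := by abel
    rwa [harr] at hh
  have hidem : IsIdempotentElem (1 - a*b) := IsIdempotentElem.one_sub hp'
  refine ⟨1 - a*b, a - (1 - a*b), ?_, ?_, hvu, ?_, ?_, ?_⟩
  · rw [pow_two]; exact hidem.eq
  · rw [star_sub, star_one, hsab]
  · abel
  · have hfa : (1 - a*b)*a = a*(1 - a*b) := by
      rw [sub_mul, one_mul, mul_sub, mul_one, hpa]
    rw [mul_sub, hfa, sub_mul a (1 - a*b) (1 - a*b)]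
  · have hh : a * (1 - a*b) = a - a*(a*b) := by rw [mul_sub, mul_one]
    rw [hh]; exact hn

end

/-- Characterizations of strongly π-*-regular elements. -/
theorem strongly_pi_star_regular_tfae {R : Type*} [Ring R] [StarRing R] (a : R) :
    List.TFAE [
      ∃ m : ℕ, 1 ≤ m ∧ ∃ e u : R, e ^ 2 = e ∧ star e = e ∧ IsUnit u ∧
        a ^ m = e * u ∧ a * e = e * a ∧ a * u = u * a ∧ e * u = u * e,
      ∃ f v : R, f ^ 2 = f ∧ star f = f ∧ IsUnit v ∧ a = f + v ∧ f * v = v * f ∧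
        IsNilpotent (a * f),
      ∃ p : R, p ^ 2 = p ∧ star p = p ∧ a * p = p * a ∧
        (∃ y : R, y = p * y * p ∧ (a * p) * y = p ∧ y * (a * p) = p) ∧
        IsNilpotent (a * (1 - p)),
      ∃ b : R, a * b = b * a ∧ star (a * b) = a * b ∧ b = b * a * b ∧
        IsNilpotent (a - a ^ 2 * b)] := by
  tfae_have 1 → 2 := dir12 a
  tfae_have 2 → 1 := dir21 a
  tfae_have 2 → 3 := dir23 a
  tfae_have 3 → 4 := dir34 a
  tfae_have 4 → 2 := dir42 a
  tfae_finish
end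

section
/- Let R be a *-ring and a ∈ R. (i) If a is strongly *-regular, i.e., a = p*u = u*p for some projection p and unit u, then a is strongly π-*-regular. (ii) If a is strongly π-*-regular, then a is strongly *-clean, i.e., a = q + w for some projection q and unit w with q*w = w*q. -/
open Finset
/-- Strongly *-regular elements are strongly π-*-regular, and strongly
π-*-regular elements are strongly *-clean. -/
theorem strongly_star_regular_implies_and_implies_star_clean {R : Type*}
    [Ring R] [StarRing R] (a : R) :
    ((∃ p u : R, p ^ 2 = p ∧ star p = p ∧ IsUnit u ∧ a = p * u ∧ a = u * p) →
      ∃ m : ℕ, 1 ≤ m ∧ ∃ e u : R, e ^ 2 = e ∧ star e = e ∧ IsUnit u ∧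
        a ^ m = e * u ∧ a * e = e * a ∧ a * u = u * a ∧ e * u = u * e) ∧
    ((∃ m : ℕ, 1 ≤ m ∧ ∃ e u : R, e ^ 2 = e ∧ star e = e ∧ IsUnit u ∧
        a ^ m = e * u ∧ a * e = e * a ∧ a * u = u * a ∧ e * u = u * e) →
      ∃ q w : R, q ^ 2 = q ∧ star q = q ∧ IsUnit w ∧ a = q + w ∧ q * w = w * q) := by
  constructor
  · rintro ⟨p, u, hp2, hps, hu, h1, h2⟩
    obtain ⟨U, rfl⟩ := hu
    have hpu : p * (↑U : R) = ↑U * p := by rw [← h1, ← h2]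
    have hpui : p * (↑U⁻¹ : R) = ↑U⁻¹ * p :=
      (Commute.units_inv_right (a := p) (u := U) hpu)
    have huui : (↑U : R) * ↑U⁻¹ = ↑U⁻¹ * ↑U := by rw [U.mul_inv, U.inv_mul]
    have hcomm : ∀ x ∈ ({p, ↑U, ↑U⁻¹} : Set R), ∀ y ∈ ({p, ↑U, ↑U⁻¹} : Set R),
        x * y = y * x := by
      rintro x (rfl | rfl | rfl) y (rfl | rfl | rfl) <;>
        first
          | rfl
          | assumption
          | exact hpu.symm
          | exact hpui.symm
          | exact huui.symm
    letI : CommRing (Subring.closure ({p, ↑U, ↑U⁻¹} : Set R)) :=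
      Subring.closureCommRingOfComm hcomm
    let S := Subring.closure ({p, ↑U, ↑U⁻¹} : Set R)
    let f : S →+* R :=
      { toFun := Subtype.val, map_one' := rfl, map_mul' := fun _ _ => rfl,
        map_zero' := rfl, map_add' := fun _ _ => rfl }
    have hfinj : Function.Injective f := Subtype.val_injective
    let P : S := ⟨p, Subring.subset_closure (by simp)⟩
    let Uu : S := ⟨↑U, Subring.subset_closure (by simp)⟩
    let Ui : S := ⟨↑U⁻¹, Subring.subset_closure (by simp)⟩
    have hPsq : P ^ 2 = P := hfinj (by rw [map_pow]; exact hp2)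
    have hUI : Uu * Ui = 1 := hfinj (by rw [map_mul, map_one]; exact U.mul_inv)
    have hWV : (P * Uu + 1 - P) * (P * Ui + 1 - P) = 1 := by
      linear_combination (Uu * Ui - Uu - Ui + 1) * hPsq + P * hUI
    have hVW : (P * Ui + 1 - P) * (P * Uu + 1 - P) = 1 := by rw [mul_comm]; exact hWV
    have hPW : P * (P * Uu + 1 - P) = P * Uu := by linear_combination (Uu - 1) * hPsq
    have cWV : f (P * Uu + 1 - P) * f (P * Ui + 1 - P) = 1 := by
      rw [← map_mul, hWV, map_one]
    have cVW : f (P * Ui + 1 - P) * f (P * Uu + 1 - P) = 1 := by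
      rw [← map_mul, hVW, map_one]
    refine ⟨1, le_refl 1, p, f (P * Uu + 1 - P), hp2, hps,
      ⟨⟨f (P * Uu + 1 - P), f (P * Ui + 1 - P), cWV, cVW⟩, rfl⟩, ?_, ?_, ?_, ?_⟩
    · rw [pow_one]
      have : f (P * (P * Uu + 1 - P)) = f (P * Uu) := congrArg f hPW
      rw [map_mul] at this
      have hfP : f P = p := rfl
      have hfPU : f (P * Uu) = p * ↑U := rfl
      rw [hfP, hfPU] at this
      rw [this]; exact h1
    · show a * p = p * a
      rw [h1, mul_assoc, ← hpu, ← mul_assoc]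
    · show a * f (P * Uu + 1 - P) = f (P * Uu + 1 - P) * a
      have hA : a ∈ S := h1 ▸ mul_mem P.2 Uu.2
      have := congrArg f (mul_comm (⟨a, hA⟩ : S) (P * Uu + 1 - P))
      rw [map_mul, map_mul] at this
      exact this
    · show p * f (P * Uu + 1 - P) = f (P * Uu + 1 - P) * p
      have := congrArg f (mul_comm P (P * Uu + 1 - P))
      rw [map_mul, map_mul] at this
      exact this
  · rintro ⟨m, hm, e, u, he2, hes, hu, ham, hae, hau, heu⟩
    obtain ⟨U, rfl⟩ := hu
    obtain ⟨n, rfl⟩ : ∃ n, m = n + 1 := ⟨m - 1, (Nat.succ_pred_eq_of_pos hm).symm⟩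
    have haui : a * (↑U⁻¹ : R) = ↑U⁻¹ * a :=
      (Commute.units_inv_right (a := a) (u := U) hau)
    have heui : e * (↑U⁻¹ : R) = ↑U⁻¹ * e :=
      (Commute.units_inv_right (a := e) (u := U) heu)
    have huui : (↑U : R) * ↑U⁻¹ = ↑U⁻¹ * ↑U := by rw [U.mul_inv, U.inv_mul]
    have hcomm : ∀ x ∈ ({a, e, ↑U, ↑U⁻¹} : Set R), ∀ y ∈ ({a, e, ↑U, ↑U⁻¹} : Set R),
        x * y = y * x := by
      rintro x (rfl | rfl | rfl | rfl) y (rfl | rfl | rfl | rfl) <;>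
        first
          | rfl
          | assumption
          | exact hae.symm
          | exact hau.symm
          | exact heu.symm
          | exact haui.symm
          | exact heui.symm
          | exact huui.symm
    letI : CommRing (Subring.closure ({a, e, ↑U, ↑U⁻¹} : Set R)) :=
      Subring.closureCommRingOfComm hcomm
    let S := Subring.closure ({a, e, ↑U, ↑U⁻¹} : Set R)
    let f : S →+* R :=
      { toFun := Subtype.val, map_one' := rfl, map_mul' := fun _ _ => rfl,
        map_zero' := rfl, map_add' := fun _ _ => rfl }
    have hfinj : Function.Injective f := Subtype.val_injective
    let A : S := ⟨a, Subring.subset_closure (by simp)⟩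
    let E : S := ⟨e, Subring.subset_closure (by simp)⟩
    let Uu : S := ⟨↑U, Subring.subset_closure (by simp)⟩
    let Ui : S := ⟨↑U⁻¹, Subring.subset_closure (by simp)⟩
    have hEsq : E ^ 2 = E := hfinj (by rw [map_pow]; exact he2)
    have hUI : Uu * Ui = 1 := hfinj (by rw [map_mul, map_one]; exact U.mul_inv)
    have hAm : A ^ (n + 1) = E * Uu := hfinj (by rw [map_pow, map_mul]; exact ham)
    have hGmul : (A - 1) * (∑ i ∈ range (n + 1), A ^ i) = A ^ (n + 1) - 1 :=
      mul_geom_sum A (n + 1)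
    have hWV : (A - 1 + E) *
        (E * A ^ n * Ui - (1 - E) * ∑ i ∈ range (n + 1), A ^ i) = 1 := by
      linear_combination (Uu * Ui + A ^ n * Ui + Uu + (∑ i ∈ range (n + 1), A ^ i)) * hEsq +
        (E * Ui - 1 + E) * hAm + E * hUI - (1 - E) * hGmul
    have hVW : (E * A ^ n * Ui - (1 - E) * ∑ i ∈ range (n + 1), A ^ i) *
        (A - 1 + E) = 1 := by rw [mul_comm]; exact hWV
    have cWV : f (A - 1 + E) *
        f (E * A ^ n * Ui - (1 - E) * ∑ i ∈ range (n + 1), A ^ i) = 1 := by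
      rw [← map_mul, hWV, map_one]
    have cVW : f (E * A ^ n * Ui - (1 - E) * ∑ i ∈ range (n + 1), A ^ i) *
        f (A - 1 + E) = 1 := by
      rw [← map_mul, hVW, map_one]
    have hWcoe : f (A - 1 + E) = a - 1 + e := by
      rw [map_add, map_sub, map_one]; rfl
    have he' : e * e = e := by rw [← sq]; exact he2
    refine ⟨1 - e, f (A - 1 + E), ?_, ?_,
      ⟨⟨f (A - 1 + E), f (E * A ^ n * Ui - (1 - E) * ∑ i ∈ range (n + 1), A ^ i),
        cWV, cVW⟩, rfl⟩, ?_, ?_⟩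
    · have h : (1 - e) ^ 2 = 1 - 2 * e + e * e := by noncomm_ring
      rw [h, he']; noncomm_ring
    · rw [star_sub, star_one, hes]
    · rw [hWcoe]; noncomm_ring
    · rw [hWcoe]
      have h1 : (1 - e) * (a - 1 + e) = (a - 1 + e) - e * (a - 1 + e) := by noncomm_ring
      have h2 : (a - 1 + e) * (1 - e) = (a - 1 + e) - (a - 1 + e) * e := by noncomm_ring
      rw [h1, h2]
      congr 1
      have := congrArg f (mul_comm E (A - 1 + E))
      rw [map_mul, map_mul, hWcoe] at this
      exact this
end

section
/- Let R be a *-ring. Then R is both strongly *-clean (every element is the sum of a projection and a unit which commute) and π-regular (for every a there exist n ≥ 1 and b with a^n = a^n * b * a^n) if and only if R is strongly π-*-regular (every element a admits m ≥ 1, a projection e, and a unit u with a^m = e*u and a, e, u pairwise commuting). -/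
section Aux

variable {R : Type*} [Ring R] [StarRing R]

/-- In a strongly *-clean ring, every idempotent is a projection. -/
lemma aux_proj
    (H : ∀ a : R, ∃ p u : R, p ^ 2 = p ∧ star p = p ∧ IsUnit u ∧ a = p + u ∧ p * u = u * p)
    {e : R} (he : e ^ 2 = e) : star e = e := by
  obtain ⟨p, u, hp, hps, hu, heq, hc⟩ := H e
  have h2 : (p + u) ^ 2 = p + u := by rw [← heq]; exact he
  have h4 : u * (2 * p + u) = u * 1 := by
    linear_combination (norm := noncomm_ring) h2 - hp - hc
  set w : R := ↑hu.unit⁻¹ with hw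
  have hw2 : w * u = 1 := hu.val_inv_mul
  have h5 : 2 * p + u = 1 := by
    linear_combination (norm := noncomm_ring) w * h4 - hw2 * (2 * p + u) + hw2
  have key : e = 1 - p := by
    linear_combination (norm := noncomm_ring) heq + h5
  rw [key, star_sub, star_one, hps]

/-- In a strongly *-clean ring, `e * y * (1 - e) = 0` for every idempotent `e`. -/
lemma aux_ort
    (H : ∀ a : R, ∃ p u : R, p ^ 2 = p ∧ star p = p ∧ IsUnit u ∧ a = p + u ∧ p * u = u * p)
    {e : R} (he : e ^ 2 = e) (y : R) : e * y * (1 - e) = 0 := by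
  have hee : e * e = e := by linear_combination (norm := noncomm_ring) he
  have hse : star e = e := aux_proj H he
  have hf2 : (e + e * y * (1 - e)) ^ 2 = e + e * y * (1 - e) := by
    linear_combination (norm := noncomm_ring)
      hee + hee * (y * (1 - e)) - e * y * hee - e * y * hee * y * (1 - e)
  have hsf : star (e + e * y * (1 - e)) = e + e * y * (1 - e) := aux_proj H hf2
  have eq1 : e + (1 - e) * star y * e = e + e * y * (1 - e) := by
    rw [← hsf]
    simp only [star_add, star_mul, star_sub, star_one, hse]
    noncomm_ring
  linear_combination (norm := noncomm_ring)
    (-e) * eq1 - hee * (star y * e) - hee * y + hee * (y * e)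

/-- In a strongly *-clean ring, idempotents are central. -/
lemma aux_central
    (H : ∀ a : R, ∃ p u : R, p ^ 2 = p ∧ star p = p ∧ IsUnit u ∧ a = p + u ∧ p * u = u * p)
    {e : R} (he : e ^ 2 = e) (x : R) : e * x = x * e := by
  have h1 := aux_ort H he x
  have h1e : (1 - e) ^ 2 = 1 - e := by linear_combination (norm := noncomm_ring) he
  have h2 := aux_ort H h1e x
  linear_combination (norm := noncomm_ring) h1 - h2

end Aux

/-- R is strongly *-clean and π-regular iff R is strongly π-*-regular. -/
theorem strongly_star_clean_pi_regular_iff_strongly_pi_star_regular {R : Type*}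
    [Ring R] [StarRing R] :
    ((∀ a : R, ∃ p u : R, p ^ 2 = p ∧ star p = p ∧ IsUnit u ∧ a = p + u ∧
        p * u = u * p) ∧
      (∀ a : R, ∃ n : ℕ, 1 ≤ n ∧ ∃ b : R, a ^ n = a ^ n * b * a ^ n)) ↔
    (∀ a : R, ∃ m : ℕ, 1 ≤ m ∧ ∃ e u : R, e ^ 2 = e ∧ star e = e ∧ IsUnit u ∧
      a ^ m = e * u ∧ a * e = e * a ∧ a * u = u * a ∧ e * u = u * e) := by
  constructor
  · rintro ⟨H1, H2⟩ a
    obtain ⟨n, hn, b, hb⟩ := H2 a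
    have he2 : (a ^ n * b) ^ 2 = a ^ n * b := by
      linear_combination (norm := noncomm_ring) -(hb * b)
    have hse : star (a ^ n * b) = a ^ n * b := aux_proj H1 he2
    have hcen : ∀ x : R, (a ^ n * b) * x = x * (a ^ n * b) := fun x => aux_central H1 he2 x
    have hf2 : (b * a ^ n) ^ 2 = b * a ^ n := by
      linear_combination (norm := noncomm_ring) -(b * hb)
    have hfcen : ∀ x : R, (b * a ^ n) * x = x * (b * a ^ n) := fun x => aux_central H1 hf2 x
    have hcf : a ^ n * (b * a ^ n) = a ^ n := by linear_combination (norm := noncomm_ring) -hb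
    have h5 : (a ^ n * b) * (b * a ^ n) = a ^ n * b := by
      linear_combination (norm := noncomm_ring) -(a ^ n * hfcen b) + hcf * b
    have h6 : (a ^ n * b) * (b * a ^ n) = b * a ^ n := by
      linear_combination (norm := noncomm_ring) hcen b * a ^ n - b * hb
    have hbc : b * a ^ n = a ^ n * b := h6.symm.trans h5
    have hce : a ^ n * (a ^ n * b) = a ^ n := by
      linear_combination (norm := noncomm_ring) -(hcen (a ^ n)) - hb
    have huv : (a ^ n + 1 - a ^ n * b) * (b * (a ^ n * b) + 1 - a ^ n * b) = 1 := by
      linear_combination (norm := noncomm_ring)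
        2 * he2 - hce + hbc * b - (a ^ n * b) * hbc * b - he2 * b
    have hvu : (b * (a ^ n * b) + 1 - a ^ n * b) * (a ^ n + 1 - a ^ n * b) = 1 := by
      linear_combination (norm := noncomm_ring) hbc + he2 - b * he2 - b * hb + hb
    refine ⟨n, hn, a ^ n * b, a ^ n + 1 - a ^ n * b, he2, hse,
      ⟨⟨_, _, huv, hvu⟩, rfl⟩, ?_, (hcen a).symm, ?_, hcen _⟩
    · linear_combination (norm := noncomm_ring) hb + he2
    · have hpa : a * a ^ n = a ^ n * a := ((Commute.refl a).pow_right n).eq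
      linear_combination (norm := noncomm_ring) hcen a + hpa
  · intro H
    constructor
    · -- strongly *-clean
      intro a
      obtain ⟨m, hm, e, u, he, hse, hu, heq, hae, hau, heu⟩ := H a
      have h7 : e * e = e := by linear_combination (norm := noncomm_ring) he
      set w : R := ↑hu.unit⁻¹ with hwdef
      have hw1 : u * w = 1 := hu.mul_val_inv
      have hw2 : w * u = 1 := hu.val_inv_mul
      have haw : a * w = w * a := by
        linear_combination (norm := noncomm_ring) w * a * hw1 - w * hau * w - hw2 * (a * w)
      have hew : e * w = w * e := by
        linear_combination (norm := noncomm_ring) w * e * hw1 - w * heu * w - hw2 * (e * w)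
      have hpow : a * a ^ (m - 1) = a ^ m := by
        rw [← pow_succ']
        congr 1
        omega
      have hcae : Commute a e := hae
      have hek : e * a ^ (m - 1) = a ^ (m - 1) * e := (hcae.symm.pow_right (m - 1)).eq
      have hpk : a ^ (m - 1) * a = a * a ^ (m - 1) := ((Commute.refl a).pow_left (m - 1)).eq
      -- geometric sum
      set T : R := ∑ i ∈ Finset.range m, a ^ i with hTdef
      have hTa : a * T = T * a :=
        (Commute.sum_right _ _ _ (fun i _ => (Commute.refl a).pow_right i)).eq
      have hTe : e * T = T * e :=
        (Commute.sum_right _ _ _ (fun i _ => hcae.symm.pow_right i)).eq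
      have hgeom : (1 - a) * T = 1 - a ^ m := by
        linear_combination (norm := noncomm_ring) -(mul_geom_sum a m)
      have hm0 : a ^ m * (1 - e) = 0 := by
        linear_combination (norm := noncomm_ring) heq * (1 - e) + heu - heu * e - u * h7
      -- the two units A and B
      have L1 : a * e * (w * a ^ (m - 1) * e) = e := by
        linear_combination (norm := noncomm_ring)
          a * hew * (a ^ (m - 1) * e) + a * w * hek * e + haw * (a ^ (m - 1) * e * e) +
            w * hpow * (e * e) + w * heq * (e * e) + w * heu * (e * e) +
            hw2 * (e * e * e) + h7 * e + h7
      have hAA' : (a * e + 1 - e) * (w * a ^ (m - 1) * e + 1 - e) = 1 := by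
        linear_combination (norm := noncomm_ring)
          L1 - a * h7 - hew * (a ^ (m - 1) * e) - w * hek * e - w * a ^ (m - 1) * h7 + h7
      have hA'A : (w * a ^ (m - 1) * e + 1 - e) * (a * e + 1 - e) = 1 := by
        linear_combination (norm := noncomm_ring)
          -(w * a ^ (m - 1) * hae * e) + w * hpk * (e * e) + w * hpow * (e * e) +
            w * heq * (e * e) + w * heu * (e * e) + hw2 * (e * e * e) + h7 * e + 2 * h7 -
            w * a ^ (m - 1) * h7 - a * h7 + hae * e
      have hBB' : (e + (a - 1) * (1 - e)) * (e - T * (1 - e)) = 1 := by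
        linear_combination (norm := noncomm_ring)
          h7 - hTe * (1 - e) + T * h7 - (a - 1) * h7 + hgeom * (1 - e) - hm0 -
            (a - 1) * T * h7 + (a - 1) * hTe * (1 - e)
      have hB'B : (e - T * (1 - e)) * (e + (a - 1) * (1 - e)) = 1 := by
        linear_combination (norm := noncomm_ring)
          h7 - hae * (1 - e) - (a - 1) * h7 + T * h7 + hgeom * (1 - e) - hm0 +
            hTa * (1 - e) - T * (a - 1) * h7 - T * hae * (1 - e)
      have hA : IsUnit (a * e + 1 - e) := ⟨⟨_, _, hAA', hA'A⟩, rfl⟩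
      have hB : IsUnit (e + (a - 1) * (1 - e)) := ⟨⟨_, _, hBB', hB'B⟩, rfl⟩
      have hABeq : (a * e + 1 - e) * (e + (a - 1) * (1 - e)) = a - 1 + e := by
        linear_combination (norm := noncomm_ring)
          a * h7 - a * (a - 1) * h7 + a * hae.symm * (1 - e) - h7 + (a - 1) * h7 -
            hae.symm * (1 - e)
      refine ⟨1 - e, a - 1 + e, ?_, ?_, hABeq ▸ (hA.mul hB), by noncomm_ring, ?_⟩
      · linear_combination (norm := noncomm_ring) h7
      · rw [star_sub, star_one, hse]
      · linear_combination (norm := noncomm_ring) hae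
    · -- π-regular
      intro a
      obtain ⟨m, hm, e, u, he, hse, hu, heq, hae, hau, heu⟩ := H a
      have h7 : e * e = e := by linear_combination (norm := noncomm_ring) he
      have hw1 : u * (↑hu.unit⁻¹ : R) = 1 := hu.mul_val_inv
      refine ⟨m, hm, ↑hu.unit⁻¹, ?_⟩
      rw [heq]
      linear_combination (norm := noncomm_ring)
        -(e * hw1 * (e * u)) - h7 * u
end

section
/- Let R be a nontrivial *-ring and n ≥ 2. Then the matrix ring M_n(R), equipped with the involution sending a matrix A = (a_ij) to the conjugate transpose (star a_ji), is not strongly π-*-regular: there exists a matrix A ∈ M_n(R) for which there do not exist m ≥ 1, a projection E, and a unit U in M_n(R) with A^m = E*U and A, E, U pairwise commuting. -/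
/-- For a nontrivial *-ring R and n ≥ 2, the matrix ring Mₙ(R) with the
conjugate-transpose involution is not strongly π-*-regular. -/
theorem matrix_not_strongly_pi_star_regular {R : Type*} [Ring R] [StarRing R]
    [Nontrivial R] (n : ℕ) (hn : 2 ≤ n) :
    ∃ A : Matrix (Fin n) (Fin n) R,
      ¬ ∃ m : ℕ, 1 ≤ m ∧ ∃ E U : Matrix (Fin n) (Fin n) R,
        E ^ 2 = E ∧ star E = E ∧ IsUnit U ∧ A ^ m = E * U ∧
        A * E = E * A ∧ A * U = U * A ∧ E * U = U * E := by
  set i0 : Fin n := ⟨0, by omega⟩ with hi0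
  set i1 : Fin n := ⟨1, by omega⟩ with hi1
  have hne : i1 ≠ i0 := by simp [hi0, hi1, Fin.ext_iff]
  set A : Matrix (Fin n) (Fin n) R :=
    Matrix.of fun i j => if i = i0 ∧ (j = i0 ∨ j = i1) then (1 : R) else 0 with hAdef
  refine ⟨A, ?_⟩
  rintro ⟨m, hm, E, U, hE2, hEs, hU, hAm, hAE, hAU, hEU⟩
  have hA : ∀ i j, A i j = if i = i0 ∧ (j = i0 ∨ j = i1) then (1 : R) else 0 :=
    fun i j => rfl
  have hrow : ∀ i j, i ≠ i0 → A i j = 0 := by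
    intro i j h; rw [hA]; simp [h]
  -- product with A on the right only sees column i0 of the left factor
  have hmulA : ∀ (X : Matrix (Fin n) (Fin n) R) i j, (X * A) i j = X i i0 * A i0 j := by
    intro X i j
    rw [Matrix.mul_apply]
    refine Finset.sum_eq_single i0 ?_ ?_
    · intro k _ hk; rw [hrow k j hk, mul_zero]
    · intro h; exact absurd (Finset.mem_univ i0) h
  -- A is idempotent
  have hA2 : A * A = A := by
    ext i j
    rw [hmulA]
    by_cases hi : i = i0
    · subst hi
      rw [hA, hA]
      simp
    · rw [hrow i i0 hi, hrow i j hi, zero_mul]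
  have hApow : ∀ k, 1 ≤ k → A ^ k = A := by
    intro k hk
    induction k, hk using Nat.le_induction with
    | base => simp
    | succ k hk ih => rw [pow_succ, ih, hA2]
  have hA_EU : A = E * U := by rw [← hApow m hm, hAm]
  obtain ⟨u, hu⟩ := hU
  -- A commutes with u⁻¹
  set V : Matrix (Fin n) (Fin n) R := Units.val u⁻¹ with hV
  have hEdef : E = A * V := by
    have : E * U * V = E := by rw [← hu, hV, mul_assoc, u.mul_inv, mul_one]
    rw [← hA_EU] at this
    exact this.symm
  have hErow : ∀ i j, i ≠ i0 → E i j = 0 := by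
    intro i j h
    rw [hEdef, Matrix.mul_apply]
    apply Finset.sum_eq_zero
    intro k _
    rw [hrow i k h, zero_mul]
  have hEcol : ∀ i j, j ≠ i0 → E i j = 0 := by
    intro i j h
    by_cases hi : i = i0
    · subst hi
      have hst : star (E j i0) = E i0 j := by
        rw [← Matrix.star_apply, hEs]
      rw [← hst, hErow j i0 h, star_zero]
    · exact hErow i j hi
  -- E * A = A, hence E i0 i0 = 1
  have hEA : E * A = A := by
    have hE2' : E * E = E := by rw [← sq, hE2]
    rw [hA_EU, ← mul_assoc, hE2']
  have hE00 : E i0 i0 = 1 := by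
    have h1 : (E * A) i0 i1 = E i0 i0 * A i0 i1 := hmulA E i0 i1
    rw [hEA] at h1
    rw [hA] at h1
    simp only [true_and, or_true, if_pos] at h1
    rw [mul_one] at h1
    exact h1.symm
  -- but (A * E) i0 i1 = 0, contradicting A * E = E * A
  have h0 : (A * E) i0 i1 = 0 := by
    rw [Matrix.mul_apply]
    apply Finset.sum_eq_zero
    intro k _
    rw [hEcol k i1 hne, mul_zero]
  have h1 : (E * A) i0 i1 = 1 := by
    rw [hmulA, hE00, one_mul, hA]
    simp
  rw [hAE, h1] at h0
  exact one_ne_zero h0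
end

section
/- Let R be a strongly π-*-regular *-ring and let e be an idempotent of R. Then the corner ring eRe is strongly π-*-regular: for every a ∈ R with a = e*a*e, there exist an integer m ≥ 1 and elements p, u, v of R, all fixed by the corner (p = e*p*e, u = e*u*e, v = e*v*e), such that p^2 = p, star p = p, u*v = e = v*u, a^m = p*u, and a, p, u pairwise commute. -/
/-- Corner rings of strongly π-*-regular rings are strongly π-*-regular. -/
theorem corner_ring_strongly_pi_star_regular {R : Type*} [Ring R] [StarRing R]
    (hR : ∀ a : R, ∃ m : ℕ, 1 ≤ m ∧ ∃ e u : R, e ^ 2 = e ∧ star e = e ∧ IsUnit u ∧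
      a ^ m = e * u ∧ a * e = e * a ∧ a * u = u * a ∧ e * u = u * e)
    (e : R) (he : e ^ 2 = e) :
    ∀ a : R, a = e * a * e →
      ∃ m : ℕ, 1 ≤ m ∧ ∃ p u v : R,
        p = e * p * e ∧ u = e * u * e ∧ v = e * v * e ∧
        p ^ 2 = p ∧ star p = p ∧ u * v = e ∧ v * u = e ∧
        a ^ m = p * u ∧ a * p = p * a ∧ a * u = u * a ∧ p * u = u * p := by
  intro a ha
  have hee : e * e = e := by rw [← sq, he]
  have hea : e * a = a := by
    conv_lhs => rw [ha]
    rw [← mul_assoc, ← mul_assoc, hee, ← ha]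
  have hae : a * e = a := by
    conv_lhs => rw [ha]
    rw [mul_assoc, hee, ← ha]
  obtain ⟨m, hm, q, w, hq2, hqs, hwu, ham, haq, haw, hqW⟩ := hR a
  obtain ⟨W, rfl⟩ := hwu
  obtain ⟨k, rfl⟩ : ∃ k, m = k + 1 := ⟨m - 1, by omega⟩
  have heam : e * a ^ (k + 1) = a ^ (k + 1) := by
    rw [pow_succ', ← mul_assoc, hea]
  have hame : a ^ (k + 1) * e = a ^ (k + 1) := by
    rw [pow_succ, mul_assoc, hae]
  set wi : R := ((W⁻¹ : Rˣ) : R) with hwi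
  have wwi : (W : R) * wi = 1 := W.mul_inv
  have wiw : wi * (W : R) = 1 := W.inv_mul
  have hq_eq1 : a ^ (k + 1) * wi = q := by rw [ham, mul_assoc, wwi, mul_one]
  have hq_eq2 : wi * a ^ (k + 1) = q := by rw [ham, hqW, ← mul_assoc, wiw, one_mul]
  have heq : e * q = q := by rw [← hq_eq1, ← mul_assoc, heam]
  have hqe : q * e = q := by rw [← hq_eq2, mul_assoc, hame]
  have hqwi : q * wi = wi * q := by
    calc q * wi = (wi * a ^ (k + 1)) * wi := by rw [hq_eq2]
      _ = wi * (a ^ (k + 1) * wi) := by rw [mul_assoc]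
      _ = wi * q := by rw [hq_eq1]
  have hqq : q * q = q := by rw [← sq, hq2]
  have h_q_cw : q * (q * (W : R)) = q * (W : R) := by rw [← mul_assoc, hqq]
  have h_q_cwi : q * (q * wi) = q * wi := by rw [← mul_assoc, hqq]
  have h_e_cw : e * (q * (W : R)) = q * (W : R) := by rw [← mul_assoc, heq]
  have h_e_cwi : e * (q * wi) = q * wi := by rw [← mul_assoc, heq]
  have h_cw_q : q * (W : R) * q = q * (W : R) := by
    rw [hqW, mul_assoc, hqq]
  have h_cwi_q : q * wi * q = q * wi := by
    rw [hqwi, mul_assoc, hqq]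
  have h_cw_e : q * (W : R) * e = q * (W : R) := by
    rw [hqW, mul_assoc, hqe, ← hqW]
  have h_cwi_e : q * wi * e = q * wi := by
    rw [hqwi, mul_assoc, hqe, ← hqwi]
  have h_cw_cwi : q * (W : R) * (q * wi) = q := by
    calc q * (W : R) * (q * wi) = (W : R) * q * (q * wi) := by rw [hqW]
      _ = (W : R) * (q * (q * wi)) := by rw [mul_assoc]
      _ = (W : R) * (q * wi) := by rw [h_q_cwi]
      _ = (W : R) * (wi * q) := by rw [hqwi]
      _ = ((W : R) * wi) * q := by rw [mul_assoc]
      _ = q := by rw [wwi, one_mul]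
  have h_cwi_cw : q * wi * (q * (W : R)) = q := by
    calc q * wi * (q * (W : R)) = wi * q * (q * (W : R)) := by rw [hqwi]
      _ = wi * (q * (q * (W : R))) := by rw [mul_assoc]
      _ = wi * (q * (W : R)) := by rw [h_q_cw]
      _ = wi * ((W : R) * q) := by rw [← hqW]
      _ = (wi * (W : R)) * q := by rw [mul_assoc]
      _ = q := by rw [wiw, one_mul]
  refine ⟨k + 1, by omega, q, q * (W : R) + e - q, q * wi + e - q, ?_, ?_, ?_, hq2, hqs,
    ?_, ?_, ?_, ?_, ?_, ?_⟩
  · rw [heq, hqe]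
  · have heu : e * (q * (W : R) + e - q) = q * (W : R) + e - q := by
      simp only [mul_add, mul_sub]
      rw [h_e_cw, hee, heq]
    have hue : (q * (W : R) + e - q) * e = q * (W : R) + e - q := by
      simp only [add_mul, sub_mul]
      rw [h_cw_e, hee, hqe]
    rw [heu, hue]
  · have heu : e * (q * wi + e - q) = q * wi + e - q := by
      simp only [mul_add, mul_sub]
      rw [h_e_cwi, hee, heq]
    have hue : (q * wi + e - q) * e = q * wi + e - q := by
      simp only [add_mul, sub_mul]
      rw [h_cwi_e, hee, hqe]
    rw [heu, hue]
  · simp only [add_mul, sub_mul, mul_add, mul_sub]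
    rw [h_cw_cwi, h_cw_e, h_cw_q, h_e_cwi, hee, heq, h_q_cwi, hqe, hqq]
    abel
  · simp only [add_mul, sub_mul, mul_add, mul_sub]
    rw [h_cwi_cw, h_cwi_e, h_cwi_q, h_e_cw, hee, heq, h_q_cw, hqe, hqq]
    abel
  · rw [mul_sub, mul_add, h_q_cw, hqe, hqq, ham]
    abel
  · exact haq
  · simp only [mul_add, mul_sub, add_mul, sub_mul]
    rw [← ham, hae, hea, haq]
    have : a * a ^ (k + 1) = a ^ (k + 1) * a := by rw [← pow_succ', pow_succ]
    rw [this]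
  · simp only [mul_add, mul_sub, add_mul, sub_mul]
    rw [h_q_cw, h_cw_q, hqe, heq, hqq]
end

section
/- Let A be a symmetric real n × n matrix (A = Aᵀ). Then A is strongly π-*-regular in M_n(ℝ) with respect to the transpose involution: there exist an integer m ≥ 1, a matrix P with P^2 = P and Pᵀ = P, and an invertible matrix U, such that A^m = P*U and A, P, U pairwise commute. -/
/-- Any real symmetric matrix is strongly π-*-regular (with respect to the
transpose involution). -/
theorem symmetric_matrix_strongly_pi_star_regular {n : ℕ}
    (A : Matrix (Fin n) (Fin n) ℝ) (hA : A.transpose = A) :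
    ∃ m : ℕ, 1 ≤ m ∧ ∃ P U : Matrix (Fin n) (Fin n) ℝ,
      P ^ 2 = P ∧ P.transpose = P ∧ IsUnit U ∧ A ^ m = P * U ∧
      A * P = P * A ∧ A * U = U * A ∧ P * U = U * P := by
  have hA' : A.IsHermitian := by
    rwa [Matrix.IsHermitian, Matrix.conjTranspose_eq_transpose_of_trivial]
  set V : Matrix (Fin n) (Fin n) ℝ := (hA'.eigenvectorUnitary : Matrix (Fin n) (Fin n) ℝ) with hV
  have hVV : star V * V = 1 := Matrix.mem_unitaryGroup_iff'.mp hA'.eigenvectorUnitary.2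
  have hVV' : V * star V = 1 := Matrix.mem_unitaryGroup_iff.mp hA'.eigenvectorUnitary.2
  set d : Fin n → ℝ := hA'.eigenvalues with hd
  set conjD : (Fin n → ℝ) → Matrix (Fin n) (Fin n) ℝ :=
    fun f => V * Matrix.diagonal f * star V with hconjD
  have hmul : ∀ f g, conjD f * conjD g = conjD (f * g) := by
    intro f g
    simp only [hconjD, mul_assoc]
    rw [show star V * (V * (Matrix.diagonal g * star V)) = Matrix.diagonal g * star V by
      rw [← mul_assoc, hVV, one_mul]]
    rw [← mul_assoc (Matrix.diagonal f), Matrix.diagonal_mul_diagonal]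
    rfl
  have hAeq : A = conjD d := by
    have := hA'.spectral_theorem
    simpa [hconjD, Function.comp] using this
  refine ⟨1, le_refl 1, conjD (fun i => if d i = 0 then 0 else 1),
      conjD (fun i => if d i = 0 then 1 else d i), ?_, ?_, ?_, ?_, ?_, ?_, ?_⟩
  · rw [pow_two, hmul]
    have : ((fun i => if d i = 0 then (0:ℝ) else 1) * fun i => if d i = 0 then 0 else 1)
        = fun i => if d i = 0 then (0:ℝ) else 1 := by
      funext i; by_cases h : d i = 0 <;> simp [h]
    rw [this]
  · rw [← Matrix.conjTranspose_eq_transpose_of_trivial]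
    simp only [hconjD, Matrix.conjTranspose_mul, Matrix.diagonal_conjTranspose,
      ← Matrix.star_eq_conjTranspose, star_star, star_mul, mul_assoc]
    rw [show star (Matrix.diagonal fun i => if d i = 0 then (0:ℝ) else 1)
        = Matrix.diagonal fun i => if d i = 0 then (0:ℝ) else 1 from by
      rw [Matrix.star_eq_conjTranspose, Matrix.diagonal_conjTranspose, star_trivial]]
  · have h1 : IsUnit (fun i => if d i = 0 then 1 else d i) := by
      refine IsUnit.of_mul_eq_one (fun i => if d i = 0 then 1 else (d i)⁻¹) ?_
      funext i
      by_cases h : d i = 0 <;> simp [h, mul_inv_cancel₀]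
    have hVunit : IsUnit V := ⟨⟨V, star V, hVV', hVV⟩, rfl⟩
    have hVsunit : IsUnit (star V) := ⟨⟨star V, V, hVV, hVV'⟩, rfl⟩
    exact (hVunit.mul ((Matrix.isUnit_diagonal).mpr h1)).mul hVsunit
  · rw [pow_one, hAeq, hmul]
    have : ((fun i => if d i = 0 then (0:ℝ) else 1) * fun i => if d i = 0 then 1 else d i)
        = d := by
      funext i; by_cases h : d i = 0 <;> simp [h]
    rw [this]
  · rw [hAeq, hmul, hmul, mul_comm]
  · rw [hAeq, hmul, hmul, mul_comm]
  · rw [hmul, hmul, mul_comm]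
end

section
/- Let R be a strongly π-*-regular *-ring. Then for every x ∈ R, if (star x)*x = 0 then x is nilpotent. -/
/-- In a strongly π-*-regular *-ring, star x * x = 0 implies x nilpotent. -/
theorem strongly_pi_star_regular_star_mul_self_eq_zero_nilpotent {R : Type*}
    [Ring R] [StarRing R]
    (hR : ∀ a : R, ∃ m : ℕ, 1 ≤ m ∧ ∃ e u : R, e ^ 2 = e ∧ star e = e ∧ IsUnit u ∧
      a ^ m = e * u ∧ a * e = e * a ∧ a * u = u * a ∧ e * u = u * e) :
    ∀ x : R, star x * x = 0 → IsNilpotent x := by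
  intro x hx
  obtain ⟨m, hm, e, u, he2, hes, hu, hxm, _, _, _⟩ := hR x
  -- star x ^ m * x ^ m = 0
  have key : star x ^ m * x ^ m = 0 := by
    obtain ⟨k, rfl⟩ := Nat.exists_eq_succ_of_ne_zero (by omega : m ≠ 0)
    rw [pow_succ, pow_succ', mul_assoc, ← mul_assoc (star x), hx, zero_mul, mul_zero]
  rw [← star_pow, hxm] at key
  have key2 : star u * (e * u) = 0 := by
    have : star (e * u) * (e * u) = star u * (e * u) := by
      rw [star_mul, hes, mul_assoc, ← mul_assoc e, ← pow_two, he2]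
    rw [← this, key]
  have heu : e * u = 0 := (hu.star.mul_right_eq_zero).mp key2
  exact ⟨m, by rw [hxm, heu]⟩
end

section
/- Let R be a *-ring. The following are equivalent: (1) R has projection stable range one, i.e., for all a, b ∈ R, if aR + bR = R (there exist x, y with a*x + b*y = 1) then there exists a projection p with a + b*p a unit; (2) for all a, b ∈ R with aR + bR = R, there exists a projection p such that a + b*p is right invertible (has a right inverse); (3) for all a, b ∈ R with aR + bR = R, there exists a projection p such that a + b*p is left invertible (has a left inverse). -/
/-- Projection stable range one can be tested with right or left
invertibility. -/
theorem psr_one_tfae {R : Type*} [Ring R] [StarRing R] :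
    List.TFAE [
      ∀ a b : R, (∃ x y : R, a * x + b * y = 1) →
        ∃ p : R, p ^ 2 = p ∧ star p = p ∧ IsUnit (a + b * p),
      ∀ a b : R, (∃ x y : R, a * x + b * y = 1) →
        ∃ p : R, p ^ 2 = p ∧ star p = p ∧ ∃ w : R, (a + b * p) * w = 1,
      ∀ a b : R, (∃ x y : R, a * x + b * y = 1) →
        ∃ p : R, p ^ 2 = p ∧ star p = p ∧ ∃ w : R, w * (a + b * p) = 1] := by
  tfae_have 1 → 2 := by
    intro h a b hab
    obtain ⟨p, hp1, hp2, hu⟩ := h a b hab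
    exact ⟨p, hp1, hp2, hu.exists_right_inv⟩
  tfae_have 1 → 3 := by
    intro h a b hab
    obtain ⟨p, hp1, hp2, hu⟩ := h a b hab
    exact ⟨p, hp1, hp2, hu.exists_left_inv⟩
  tfae_have 2 → 1 := by
    intro h a b hab
    obtain ⟨p, hp1, hp2, w, hw⟩ := h a b hab
    set u := a + b * p with hu
    -- (w, 1 - w*u) is unimodular : w*u + (1 - w*u)*1 = 1
    obtain ⟨q, hq1, hq2, v, hv⟩ := h w (1 - w * u) ⟨u, 1, by noncomm_ring⟩
    -- hv : (w + (1 - w*u)*q) * v = 1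
    set s := w + (1 - w * u) * q with hs
    have hus : u * s = 1 := by
      have h1 : u * s = u * w + u * q - (u * w) * (u * q) := by
        rw [hs]; noncomm_ring
      rw [h1, hw, one_mul, add_sub_cancel_right]
    -- v = u, hence s * u = 1
    have hvu : v = u := by
      calc v = (u * s) * v := by rw [hus, one_mul]
        _ = u * (s * v) := by rw [mul_assoc]
        _ = u := by rw [hv, mul_one]
    have hsu : s * u = 1 := by rw [← hvu]; exact hv
    exact ⟨p, hp1, hp2, ⟨⟨u, s, hus, hsu⟩, rfl⟩⟩
  tfae_have 3 → 1 := by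
    intro h a b hab
    obtain ⟨p, hp1, hp2, w, hw⟩ := h a b hab
    set u := a + b * p with hu
    -- (w, 0) is unimodular : w*u + 0*0 = 1
    obtain ⟨q, hq1, hq2, v, hv⟩ := h w 0 ⟨u, 0, by simp [hw]⟩
    -- hv : v * (w + 0*q) = 1, i.e. v * w = 1
    have hvw : v * w = 1 := by simpa using hv
    have hvu : v = u := by
      calc v = v * (w * u) := by rw [hw, mul_one]
        _ = (v * w) * u := by rw [mul_assoc]
        _ = u := by rw [hvw, one_mul]
    have huw : u * w = 1 := by rw [← hvu]; exact hvw
    exact ⟨p, hp1, hp2, ⟨⟨u, w, huw, hw⟩, rfl⟩⟩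
  tfae_finish
end

section
/- Let R be a strongly *-clean *-ring (every element of R is the sum of a projection and a unit which commute with each other). Then R has projection stable range one: for all a, b ∈ R, if there exist x, y with a*x + b*y = 1, then there exists a projection p such that a + b*p is a unit. -/
section StarCleanAux

variable {R : Type*} [Ring R] [StarRing R]

/-- Strongly *-clean condition. -/
private def SC (R : Type*) [Ring R] [StarRing R] : Prop :=
  ∀ a : R, ∃ p u : R, p ^ 2 = p ∧ star p = p ∧ IsUnit u ∧ a = p + u ∧ p * u = u * p

private lemma sc_idem_star (h : SC R) {e : R} (he : e * e = e) : star e = e := by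
  obtain ⟨p, u, hp2, hps, hu, heq, hc⟩ := h e
  obtain ⟨U, hU⟩ := hu
  subst hU
  have hp : p * p = p := by rw [← pow_two]; exact hp2
  have hee : e * e = p * p + p * ↑U + (↑U * p + ↑U * ↑U) := by
    rw [heq, add_mul, mul_add, mul_add]
  have h2 : p + ↑U = p + p * ↑U + (p * ↑U + ↑U * ↑U) := by
    rw [← heq, ← he, hee, hp, hc]
  rw [add_assoc] at h2
  have h3 : (U : R) = p * ↑U + (p * ↑U + ↑U * ↑U) := add_left_cancel h2
  have h5 : (1 : R) = p + (p + ↑U) := by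
    have := congrArg (· * (↑U⁻¹ : R)) h3
    simpa [add_mul, mul_assoc, U.mul_inv] using this
  have hu' : (U : R) = 1 - (p + p) := by rw [h5]; abel
  have he2 : e = 1 - p := by rw [heq, hu']; abel
  rw [he2, star_sub, star_one, hps]

private lemma sc_idem_central (h : SC R) {e : R} (he : e * e = e) (x : R) :
    e * x = x * e := by
  have h0 : (1 - e) * e = 0 := by rw [sub_mul, one_mul, he, sub_self]
  have h0' : e * (1 - e) = 0 := by rw [mul_sub, mul_one, he, sub_self]
  have hse : star e = e := sc_idem_star h he
  -- first: e * z * (1 - e) = 0 for all z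
  have key : ∀ z : R, e * z * (1 - e) = 0 := by
    intro z
    have hf2 : (e + e * z * (1 - e)) * (e + e * z * (1 - e)) = e + e * z * (1 - e) := by
      have expand : (e + e * z * (1 - e)) * (e + e * z * (1 - e)) =
          e * e + e * e * z * (1 - e) + e * z * ((1 - e) * e)
            + e * z * (((1 - e) * e) * (z * (1 - e))) := by noncomm_ring
      rw [expand, he, h0, mul_zero, zero_mul, mul_zero, add_zero, add_zero]
    have hfs := sc_idem_star h hf2
    have hfs' : e + (1 - e) * star z * e = e + e * z * (1 - e) := by
      calc e + (1 - e) * star z * e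
          = star (e + e * z * (1 - e)) := by
            simp [star_mul, hse, mul_assoc]
        _ = e + e * z * (1 - e) := hfs
    have h6 : (1 - e) * star z * e = e * z * (1 - e) := add_left_cancel hfs'
    have h7 : e * ((1 - e) * star z * e) = e * z * (1 - e) := by
      rw [h6]
      calc e * (e * z * (1 - e)) = e * e * z * (1 - e) := by noncomm_ring
        _ = e * z * (1 - e) := by rw [he]
    calc e * z * (1 - e) = e * ((1 - e) * star z * e) := h7.symm
      _ = (e * (1 - e)) * star z * e := by noncomm_ring
      _ = 0 := by rw [h0', zero_mul, zero_mul]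
  -- second: (1 - e) * z * e = 0 for all z
  have key2 : ∀ z : R, (1 - e) * z * e = 0 := by
    intro z
    have hg2 : (e + (1 - e) * z * e) * (e + (1 - e) * z * e) = e + (1 - e) * z * e := by
      have expand : (e + (1 - e) * z * e) * (e + (1 - e) * z * e) =
          e * e + (e * (1 - e)) * z * e + (1 - e) * z * (e * e)
            + (1 - e) * z * ((e * (1 - e)) * (z * e)) := by noncomm_ring
      rw [expand, he, h0', zero_mul, zero_mul, zero_mul, mul_zero, add_zero, add_zero]
    have hgs := sc_idem_star h hg2
    have hgs' : e + e * star z * (1 - e) = e + (1 - e) * z * e := by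
      calc e + e * star z * (1 - e)
          = star (e + (1 - e) * z * e) := by simp [star_mul, hse, mul_assoc]
        _ = e + (1 - e) * z * e := hgs
    have h6 : e * star z * (1 - e) = (1 - e) * z * e := add_left_cancel hgs'
    rw [← h6, key (star z)]
  have k1 := key x
  have k2 := key2 x
  have e1 : e * x - e * x * e = 0 := by
    calc e * x - e * x * e = e * x * (1 - e) := by noncomm_ring
      _ = 0 := k1
  have e2 : x * e - e * x * e = 0 := by
    calc x * e - e * x * e = (1 - e) * x * e := by noncomm_ring
      _ = 0 := k2
  have := sub_eq_zero.mp e1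
  rw [this, ← sub_eq_zero]
  calc e * x * e - x * e = -((1-e) * x * e) := by noncomm_ring
    _ = 0 := by rw [k2, neg_zero]

private lemma sc_corner_inv (h : SC R) {e c r : R} (he : e * e = e)
    (h1 : c * r = e) (h2 : e * c = c) (h3 : r * e = r) : r * c = e := by
  have hg : (r * c) * (r * c) = r * c := by
    calc (r * c) * (r * c) = r * ((c * r) * c) := by noncomm_ring
      _ = r * c := by rw [h1, h2]
  have hgcen := sc_idem_central h hg
  have hecen := sc_idem_central h he
  have hgc : (r * c) * c = c := by
    rw [hgcen c]
    calc c * (r * c) = (c * r) * c := by noncomm_ring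
      _ = c := by rw [h1, h2]
  have hge : (r * c) * e = r * c := by
    rw [hgcen e]
    calc e * (r * c) = (e * r) * c := by noncomm_ring
      _ = r * c := by rw [hecen r, h3]
  have : e - r * c = 0 := by
    calc e - r * c = (e - r * c) * e := by rw [sub_mul, he, hge]
      _ = (e - r * c) * (c * r) := by rw [h1]
      _ = (e * c - (r * c) * c) * r := by noncomm_ring
      _ = 0 := by rw [h2, hgc, sub_self, zero_mul]
  have := sub_eq_zero.mp this
  exact this.symm

private theorem sc_main (h : SC R) :
    ∀ a b : R, (∃ x y : R, a * x + b * y = 1) →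
      ∃ p : R, p ^ 2 = p ∧ star p = p ∧ IsUnit (a + b * p) := by
  rintro a b ⟨x, y, hxy⟩
  obtain ⟨p, u, hp2, hps, hu, heq, hc⟩ := h (a * x)
  obtain ⟨U, hU⟩ := hu
  subst hU
  have hp : p * p = p := by rw [← pow_two]; exact hp2
  have pc : ∀ z : R, p * z = z * p := sc_idem_central h hp
  set e : R := 1 - p with he_def
  have hee : e * e = e := by
    have : (1 - p) * (1 - p) = 1 - p - (p - p * p) := by noncomm_ring
    rw [he_def, this, hp, sub_self, sub_zero]
  have ec : ∀ z : R, e * z = z * e := by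
    intro z
    rw [he_def, sub_mul, mul_sub, one_mul, mul_one, pc]
  have hep : e * p = 0 := by rw [he_def, sub_mul, one_mul, hp, sub_self]
  have hpe : p * e = 0 := by rw [← ec, hep]
  have he_ax : e * (a * x) = e * ↑U := by
    rw [heq, mul_add, hep, zero_add]
  have hp_ax : p * (a * x) = p + p * ↑U := by rw [heq, mul_add, hp]
  have hp_by : p * (b * y) = -(p * ↑U) := by
    have h1 : p * (a * x) + p * (b * y) = p := by
      rw [← mul_add, hxy, mul_one]
    rw [hp_ax] at h1
    calc p * (b * y) = (p + p * ↑U + p * (b * y)) - (p + p * ↑U) := by abel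
      _ = p - (p + p * ↑U) := by rw [h1]
      _ = -(p * ↑U) := by abel
  -- corner inverse of e * a
  set s : R := x * ↑U⁻¹ * e with hs_def
  have hAs : (e * a) * s = e := by
    calc (e * a) * s = (e * (a * x)) * (↑U⁻¹ * e) := by rw [hs_def]; noncomm_ring
      _ = e * (↑U * ↑U⁻¹) * e := by rw [he_ax]; noncomm_ring
      _ = e := by rw [U.mul_inv, mul_one, hee]
  have hsA : s * (e * a) = e := by
    refine sc_corner_inv h hee hAs ?_ ?_
    · calc e * (e * a) = (e * e) * a := by noncomm_ring
        _ = e * a := by rw [hee]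
    · rw [hs_def]
      calc x * ↑U⁻¹ * e * e = x * ↑U⁻¹ * (e * e) := by noncomm_ring
        _ = x * ↑U⁻¹ * e := by rw [hee]
  -- corner inverse of p * b
  set s' : R := -(y * ↑U⁻¹ * p) with hs'_def
  have hBs' : (p * b) * s' = p := by
    calc (p * b) * s' = -((p * (b * y)) * (↑U⁻¹ * p)) := by rw [hs'_def]; noncomm_ring
      _ = p * (↑U * ↑U⁻¹) * p := by rw [hp_by]; noncomm_ring
      _ = p := by rw [U.mul_inv, mul_one, hp]
  have hs'p : s' * p = s' := by
    rw [hs'_def]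
    calc -(y * ↑U⁻¹ * p) * p = -(y * ↑U⁻¹ * (p * p)) := by noncomm_ring
      _ = -(y * ↑U⁻¹ * p) := by rw [hp]
  have hs'B : s' * (p * b) = p := by
    refine sc_corner_inv h hp hBs' ?_ hs'p
    calc p * (p * b) = (p * p) * b := by noncomm_ring
      _ = p * b := by rw [hp]
  -- the element g₂ and the clean decomposition of -g₂
  set g₂ : R := s' * (p * a) with hg2_def
  have hpg : p * g₂ = g₂ := by
    rw [hg2_def]
    calc p * (s' * (p * a)) = (p * s') * (p * a) := by noncomm_ring
      _ = (s' * p) * (p * a) := by rw [pc]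
      _ = s' * (p * a) := by rw [hs'p]
  obtain ⟨q, v, hq2, hqs, hv, hveq, hvc⟩ := h (-g₂)
  obtain ⟨V, hV⟩ := hv
  subst hV
  have hq : q * q = q := by rw [← pow_two]; exact hq2
  have qc : ∀ z : R, q * z = z * q := sc_idem_central h hq
  set f : R := p * q with hf_def
  have hf : f * f = f := by
    rw [hf_def]
    calc (p * q) * (p * q) = p * (q * p) * q := by noncomm_ring
      _ = p * (p * q) * q := by rw [qc]
      _ = (p * p) * (q * q) := by noncomm_ring
      _ = p * q := by rw [hp, hq]
  have hfs : star f = f := sc_idem_star h hf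
  -- g₂ + f = -(p * V)
  have hgf : g₂ + f = -(p * ↑V) := by
    have h1 : p * (-g₂) = p * q + p * ↑V := by rw [hveq, mul_add]
    rw [mul_neg, hpg] at h1
    rw [hf_def]
    calc g₂ + p * q = -(-g₂) + p * q := by rw [neg_neg]
      _ = -(p * q + p * ↑V) + p * q := by rw [h1]
      _ = -(p * ↑V) := by abel
  -- B = p*a + p*b*f as a product of corner units
  have hBform : p * a + (p * b) * f = (p * b) * (-(p * ↑V)) := by
    have h1 : (p * b) * g₂ = p * a := by
      rw [hg2_def]
      calc (p * b) * (s' * (p * a)) = ((p * b) * s') * (p * a) := by noncomm_ring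
        _ = p * (p * a) := by rw [hBs']
        _ = (p * p) * a := by noncomm_ring
        _ = p * a := by rw [hp]
    calc p * a + (p * b) * f = (p * b) * g₂ + (p * b) * f := by rw [h1]
      _ = (p * b) * (g₂ + f) := by rw [mul_add]
      _ = (p * b) * (-(p * ↑V)) := by rw [hgf]
  set t : R := -(↑V⁻¹ * p * s') with ht_def
  have hps' : p * s' = s' := by rw [pc, hs'p]
  have hBt : (p * a + (p * b) * f) * t = p := by
    rw [hBform, ht_def]
    calc (p * b) * (-(p * ↑V)) * -(↑V⁻¹ * p * s')
        = (p * b) * (p * (↑V * ↑V⁻¹) * (p * s')) := by noncomm_ring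
      _ = (p * b) * ((p * p) * s') := by rw [V.mul_inv, mul_one]; noncomm_ring
      _ = (p * b) * s' := by rw [hp, hps']
      _ = p := hBs'
  have htB : t * (p * a + (p * b) * f) = p := by
    rw [hBform, ht_def]
    calc -(↑V⁻¹ * p * s') * ((p * b) * (-(p * ↑V)))
        = ↑V⁻¹ * p * (s' * (p * b)) * (p * ↑V) := by noncomm_ring
      _ = ↑V⁻¹ * p * p * (p * ↑V) := by rw [hs'B]
      _ = ↑V⁻¹ * ((p * p) * p * ↑V) := by noncomm_ring
      _ = ↑V⁻¹ * (p * ↑V) := by rw [hp, hp]  -- p*p*p = p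
      _ = ↑V⁻¹ * (↑V * p) := by rw [pc]
      _ = (↑V⁻¹ * ↑V) * p := by noncomm_ring
      _ = p := by rw [V.inv_mul, one_mul]
  -- assemble
  set B : R := p * a + (p * b) * f with hB_def
  have hept : e + p = 1 := by rw [he_def]; abel
  have hbf : b * f = (p * b) * f := by
    rw [hf_def]
    have step : (p * b) * (p * q) = (p * b) * q := by
      calc (p * b) * (p * q) = p * (b * p) * q := by noncomm_ring
        _ = p * (p * b) * q := by rw [← pc b]
        _ = ((p * p) * b) * q := by noncomm_ring
        _ = (p * b) * q := by rw [hp]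
    rw [step]
    calc b * (p * q) = (b * p) * q := by noncomm_ring
      _ = (p * b) * q := by rw [← pc b]
  have habf : a + b * f = e * a + B := by
    calc a + b * f = (e + p) * a + (p * b) * f := by rw [hept, one_mul, hbf]
      _ = e * a + B := by rw [hB_def, add_mul]; abel
  have hpt : p * t = t := by
    rw [ht_def]
    calc p * -(↑V⁻¹ * p * s') = -(p * ↑V⁻¹ * (p * s')) := by noncomm_ring
      _ = -(↑V⁻¹ * p * (p * s')) := by rw [pc (↑V⁻¹ : R)]
      _ = -(↑V⁻¹ * (p * p) * s') := by noncomm_ring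
      _ = -(↑V⁻¹ * p * s') := by rw [hp]
  have htp : t * p = t := by
    rw [ht_def]
    calc -(↑V⁻¹ * p * s') * p = -(↑V⁻¹ * p * (s' * p)) := by noncomm_ring
      _ = -(↑V⁻¹ * p * s') := by rw [hs'p]
  have hAt : (e * a) * t = 0 := by
    calc (e * a) * t = (e * a) * (p * t) := by rw [hpt]
      _ = e * (a * p) * t := by noncomm_ring
      _ = e * (p * a) * t := by rw [← pc a]
      _ = (e * p) * (a * t) := by noncomm_ring
      _ = 0 := by rw [hep, zero_mul]
  have htA : t * (e * a) = 0 := by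
    calc t * (e * a) = (t * p) * (e * a) := by rw [htp]
      _ = t * ((p * e) * a) := by noncomm_ring
      _ = 0 := by rw [hpe, zero_mul, mul_zero]
  have hes : e * s = s := by
    rw [hs_def]
    calc e * (x * ↑U⁻¹ * e) = (e * x) * ↑U⁻¹ * e := by noncomm_ring
      _ = (x * e) * ↑U⁻¹ * e := by rw [ec x]
      _ = x * (e * ↑U⁻¹) * e := by noncomm_ring
      _ = x * (↑U⁻¹ * e) * e := by rw [ec (↑U⁻¹ : R)]
      _ = x * ↑U⁻¹ * (e * e) := by noncomm_ring
      _ = x * ↑U⁻¹ * e := by rw [hee]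
  have hse : s * e = s := by
    rw [hs_def]
    calc x * ↑U⁻¹ * e * e = x * ↑U⁻¹ * (e * e) := by noncomm_ring
      _ = x * ↑U⁻¹ * e := by rw [hee]
  have hpB : p * B = B := by
    rw [hB_def]
    calc p * (p * a + (p * b) * f) = (p * p) * a + ((p * p) * b) * f := by noncomm_ring
      _ = p * a + (p * b) * f := by rw [hp]
  have heB : e * B = 0 := by
    calc e * B = e * (p * B) := by rw [hpB]
      _ = (e * p) * B := by noncomm_ring
      _ = 0 := by rw [hep, zero_mul]
  have hBs : B * s = 0 := by
    calc B * s = B * (e * s) := by rw [hes]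
      _ = (B * e) * s := by noncomm_ring
      _ = (e * B) * s := by rw [← ec B]
      _ = 0 := by rw [heB, zero_mul]
  have hsB : s * B = 0 := by
    calc s * B = (s * e) * B := by rw [hse]
      _ = s * (e * B) := by noncomm_ring
      _ = 0 := by rw [heB, mul_zero]
  have mul1 : (a + b * f) * (s + t) = 1 := by
    rw [habf]
    calc (e * a + B) * (s + t)
        = (e * a) * s + (e * a) * t + (B * s + B * t) := by noncomm_ring
      _ = e + 0 + (0 + p) := by rw [hAs, hAt, hBs, hBt]
      _ = e + p := by abel
      _ = 1 := hept
  have mul2 : (s + t) * (a + b * f) = 1 := by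
    rw [habf]
    calc (s + t) * (e * a + B)
        = s * (e * a) + s * B + (t * (e * a) + t * B) := by noncomm_ring
      _ = e + 0 + (0 + p) := by rw [hsA, hsB, htA, htB]
      _ = e + p := by abel
      _ = 1 := hept
  refine ⟨f, ?_, hfs, ⟨⟨a + b * f, s + t, mul1, mul2⟩, rfl⟩⟩
  rw [pow_two]; exact hf

end StarCleanAux

/-- A strongly *-clean ring has projection stable range one. -/
theorem strongly_star_clean_psr_one {R : Type*} [Ring R] [StarRing R]
    (h : ∀ a : R, ∃ p u : R, p ^ 2 = p ∧ star p = p ∧ IsUnit u ∧ a = p + u ∧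
      p * u = u * p) :
    ∀ a b : R, (∃ x y : R, a * x + b * y = 1) →
      ∃ p : R, p ^ 2 = p ∧ star p = p ∧ IsUnit (a + b * p) := by
  exact sc_main h
end
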